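/- Let S be a generating subset of an abelian group G with 0 ∈ S and S ≠ G, and let H be a 1-atom of S with 0 ∈ H. Then H is a subgroup of G, and moreover κ_1(S) ≥ |S|/2. -/

import Mathlib

open Pointwise

variable {G : Type*} [AddCommGroup G]

/-- The boundary of `X` with respect to `S`: `∂(X) = (X + S) \ X`. -/
def bdry (S X : Set G) : Set G := (X + S) \ X

/-- The co-image of `X` with respect to `S`: `∇(X) = G \ (X + S)`. -/
def coimg (S X : Set G) : Set G := (X + S)ᶜ

/-- `S` is `k`-separable: some finite `X` has `|X| ≥ k` and `|∇(X)| ≥ k`. -/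
def IsSep (S : Set G) (k : ℕ) : Prop :=
  ∃ X : Set G, X.Finite ∧ k ≤ X.encard ∧ k ≤ (coimg S X).encard

/-- The `k`-th connectivity `κ_k(S) = min {|∂(X)| : X finite, |X| ≥ k, |∇(X)| ≥ k}`. -/
noncomputable def kappa (S : Set G) (k : ℕ) : ℕ∞ :=
  ⨅ X ∈ {X : Set G | X.Finite ∧ k ≤ X.encard ∧ k ≤ (coimg S X).encard}, (bdry S X).encard

/-- `X` is a `k`-fragment of `S`. -/
def IsFragment (S X : Set G) (k : ℕ) : Prop :=
  X.Finite ∧ k ≤ X.encard ∧ k ≤ (coimg S X).encard ∧ (bdry S X).encard = kappa S k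

/-- `X` is a `k`-atom of `S`: a `k`-fragment of minimum cardinality. -/
def IsAtomK (S X : Set G) (k : ℕ) : Prop :=
  IsFragment S X k ∧ ∀ Y : Set G, IsFragment S Y k → X.encard ≤ Y.encard

namespace Stmt5

open Set

/-- A candidate set: finite, nonempty, with nonempty co-image. -/
def Cand (S X : Set G) : Prop :=
  X.Finite ∧ 1 ≤ X.encard ∧ 1 ≤ (coimg S X).encard

lemma cand_def {S X : Set G} :
    Cand S X ↔ X ∈ {X : Set G | X.Finite ∧ ((1:ℕ):ℕ∞) ≤ X.encard ∧
      ((1:ℕ):ℕ∞) ≤ (coimg S X).encard} := by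
  simp [Cand, Set.mem_setOf_eq]

lemma kappa_le {S X : Set G} (hX : Cand S X) : kappa S 1 ≤ (bdry S X).encard := by
  rw [kappa]
  exact biInf_le _ (cand_def.1 hX)

lemma frag_iff {S X : Set G} :
    IsFragment S X 1 ↔ Cand S X ∧ (bdry S X).encard ≤ kappa S 1 := by
  constructor
  · rintro ⟨h1, h2, h3, h4⟩
    refine ⟨⟨h1, by simpa using h2, by simpa using h3⟩, le_of_eq h4⟩
  · rintro ⟨hc, hle⟩
    exact ⟨hc.1, by simpa using hc.2.1, by simpa using hc.2.2,
      le_antisymm hle (kappa_le hc)⟩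

lemma frag_cand {S X : Set G} (h : IsFragment S X 1) : Cand S X := (frag_iff.1 h).1

lemma subset_add {S : Set G} (h0 : (0:G) ∈ S) (X : Set G) : X ⊆ X + S :=
  fun x hx => ⟨x, hx, 0, h0, (add_zero x)⟩

lemma add_eq_union {S : Set G} (h0 : (0:G) ∈ S) (X : Set G) :
    X + S = X ∪ bdry S X := by
  rw [bdry, Set.union_diff_cancel' (fun a ha => ha) (subset_add h0 X)]

lemma coimg_mono {S X Y : Set G} (h : X ⊆ Y) : coimg S Y ⊆ coimg S X := by
  apply Set.compl_subset_compl.2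
  exact Set.add_subset_add_right h

lemma coimg_nonempty {S X : Set G} (h : IsFragment S X 1) : (coimg S X).Nonempty := by
  have := h.2.2.1
  simpa using this

lemma frag_nonempty {S X : Set G} (h : IsFragment S X 1) : X.Nonempty := by
  have := h.2.1; simpa using this

/-- Submodularity of the boundary. -/
lemma submod (S X Y : Set G) :
    (bdry S (X ∪ Y)).encard + (bdry S (X ∩ Y)).encard
      ≤ (bdry S X).encard + (bdry S Y).encard := by
  set P := bdry S (X ∪ Y) with hP
  set Q := ((X + S) ∩ (Y + S)) \ (X ∩ Y) with hQ
  set R := bdry S X with hR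
  set T := bdry S Y with hT
  have hQ' : bdry S (X ∩ Y) ⊆ Q := by
    apply Set.diff_subset_diff_left
    exact Set.inter_add_subset
  have h1 : P ∪ Q ⊆ R ∪ T := by
    rintro g (⟨hg1, hg2⟩ | ⟨⟨hgX, hgY⟩, hg2⟩)
    · rw [Set.union_add] at hg1
      rcases hg1 with h | h
      · exact Or.inl ⟨h, fun hx => hg2 (Or.inl hx)⟩
      · exact Or.inr ⟨h, fun hx => hg2 (Or.inr hx)⟩
    · by_cases hx : g ∈ X
      · exact Or.inr ⟨hgY, fun hy => hg2 ⟨hx, hy⟩⟩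
      · exact Or.inl ⟨hgX, hx⟩
  have h2 : P ∩ Q ⊆ R ∩ T := by
    rintro g ⟨⟨_, hg2⟩, ⟨⟨hgX, hgY⟩, _⟩⟩
    exact ⟨⟨hgX, fun hx => hg2 (Or.inl hx)⟩, ⟨hgY, fun hy => hg2 (Or.inr hy)⟩⟩
  calc P.encard + (bdry S (X ∩ Y)).encard
      ≤ P.encard + Q.encard := by
        exact add_le_add_right (Set.encard_mono hQ') _
    _ = (P ∪ Q).encard + (P ∩ Q).encard := (Set.encard_union_add_encard_inter P Q).symm
    _ ≤ (R ∪ T).encard + (R ∩ T).encard :=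
        add_le_add (Set.encard_mono h1) (Set.encard_mono h2)
    _ = R.encard + T.encard := Set.encard_union_add_encard_inter R T

/-- In the "good case", the intersection of two fragments is a fragment. -/
lemma good_case {S A B : Set G} (hk : kappa S 1 ≠ ⊤)
    (hA : IsFragment S A 1) (hB : IsFragment S B 1)
    (hi : (A ∩ B).Nonempty) (hu : (coimg S (A ∪ B)).Nonempty) :
    IsFragment S (A ∩ B) 1 := by
  have hcap : Cand S (A ∩ B) := by
    refine ⟨hA.1.subset Set.inter_subset_left, by simpa using hi, ?_⟩
    simp only [Set.one_le_encard_iff_nonempty]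
    exact (coimg_nonempty hA).mono (coimg_mono Set.inter_subset_left)
  have hcup : Cand S (A ∪ B) := ⟨hA.1.union hB.1,
    by simpa using (frag_nonempty hA).mono Set.subset_union_left, by simpa using hu⟩
  have h1 : kappa S 1 ≤ (bdry S (A ∩ B)).encard := kappa_le hcap
  have h2 : kappa S 1 ≤ (bdry S (A ∪ B)).encard := kappa_le hcup
  have h3 := submod S A B
  rw [hA.2.2.2, hB.2.2.2] at h3
  -- (bdry (A∩B)).encard ≤ kappa
  refine frag_iff.2 ⟨hcap, ?_⟩
  have h4 : kappa S 1 + (bdry S (A ∩ B)).encard ≤ kappa S 1 + kappa S 1 :=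
    le_trans (add_le_add_left h2 _) h3
  exact (WithTop.add_le_add_iff_left hk).1 h4

lemma atom_subset {S A B : Set G} (hk : kappa S 1 ≠ ⊤)
    (hA : IsAtomK S A 1) (hB : IsFragment S B 1)
    (hi : (A ∩ B).Nonempty) (hu : (coimg S (A ∪ B)).Nonempty) : A ⊆ B := by
  have hfr := good_case hk hA.1 hB hi hu
  have hle := hA.2 _ hfr
  have heq : A ∩ B = A :=
    hA.1.1.eq_of_subset_of_encard_le' Set.inter_subset_left hle
  rw [← heq]
  exact Set.inter_subset_right


/-! ### Translation lemmas -/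

lemma encard_sadd (g : G) (X : Set G) : ({g} + X).encard = X.encard := by
  rw [Set.singleton_add]
  exact (add_right_injective g).encard_image _

lemma finite_sadd {g : G} {X : Set G} (h : X.Finite) : ({g} + X).Finite := by
  rw [Set.singleton_add]; exact h.image _

lemma sadd_compl (g : G) (X : Set G) : ({g} + Xᶜ) = ({g} + X)ᶜ := by
  rw [Set.singleton_add, Set.singleton_add]
  exact Set.image_compl_eq (Equiv.addLeft g).bijective

lemma sadd_diff (g : G) (A B : Set G) : ({g} + (A \ B)) = ({g} + A) \ ({g} + B) := by
  rw [Set.singleton_add, Set.singleton_add, Set.singleton_add]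
  exact Set.image_diff (add_right_injective g) _ _

lemma bdry_sadd (S : Set G) (g : G) (X : Set G) :
    bdry S ({g} + X) = {g} + bdry S X := by
  rw [bdry, bdry, add_assoc, sadd_diff]

lemma coimg_sadd (S : Set G) (g : G) (X : Set G) :
    coimg S ({g} + X) = {g} + coimg S X := by
  rw [coimg, coimg, add_assoc, sadd_compl]

lemma frag_sadd {S X : Set G} (g : G) (h : IsFragment S X 1) :
    IsFragment S ({g} + X) 1 := by
  obtain ⟨h1, h2, h3, h4⟩ := h
  exact ⟨finite_sadd h1, by rwa [encard_sadd], by rwa [coimg_sadd, encard_sadd],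
    by rwa [bdry_sadd, encard_sadd]⟩

lemma atom_sadd {S X : Set G} (g : G) (h : IsAtomK S X 1) :
    IsAtomK S ({g} + X) 1 := by
  refine ⟨frag_sadd g h.1, fun Y hY => ?_⟩
  rw [encard_sadd]
  exact h.2 Y hY

/-! ### Existence of fragments and atoms -/

lemma cand_singleton {S : Set G} (h0 : (0:G) ∈ S) (hne : S ≠ Set.univ) (x : G) :
    Cand S ({x} : Set G) := by
  refine ⟨Set.finite_singleton x, by simp, ?_⟩
  have : coimg S {x} = {x} + Sᶜ := by
    rw [coimg, sadd_compl, Set.singleton_add]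
  rw [this, Set.singleton_add]
  simp only [Set.one_le_encard_iff_nonempty]
  exact (Set.nonempty_compl.2 hne).image _

lemma exists_fragment {S : Set G} (h0 : (0:G) ∈ S) (hne : S ≠ Set.univ) :
    ∃ X : Set G, IsFragment S X 1 := by
  have hT : {n : ℕ∞ | ∃ X : Set G, Cand S X ∧ (bdry S X).encard = n}.Nonempty :=
    ⟨_, {(0:G)}, cand_singleton h0 hne 0, rfl⟩
  obtain ⟨m, ⟨X, hX, hXm⟩, hmin⟩ := wellFounded_lt.has_min _ hT
  refine ⟨X, frag_iff.2 ⟨hX, ?_⟩⟩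
  rw [hXm]
  rw [kappa]
  refine le_iInf fun Y => le_iInf fun hY => ?_
  have hY' : Cand S Y := cand_def.2 hY
  exact not_lt.1 (hmin _ ⟨Y, hY', rfl⟩)

lemma exists_atom {S : Set G} (h0 : (0:G) ∈ S) (hne : S ≠ Set.univ) :
    ∃ X : Set G, IsAtomK S X 1 := by
  obtain ⟨X0, hX0⟩ := exists_fragment h0 hne
  have hT : {n : ℕ∞ | ∃ X : Set G, IsFragment S X 1 ∧ X.encard = n}.Nonempty :=
    ⟨_, X0, hX0, rfl⟩
  obtain ⟨m, ⟨X, hX, hXm⟩, hmin⟩ := wellFounded_lt.has_min _ hT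
  refine ⟨X, hX, fun Y hY => ?_⟩
  rw [hXm]
  exact not_lt.1 (hmin _ ⟨Y, hY, rfl⟩)


/-! ### Duality with `-S` -/

lemma bdry_coimg_subset (S X : Set G) : bdry (-S) (coimg S X) ⊆ bdry S X := by
  rintro z ⟨hz1, hz2⟩
  rw [coimg, Set.mem_compl_iff, not_not] at hz2
  refine ⟨hz2, fun hzX => ?_⟩
  obtain ⟨y, hy, s', hs', rfl⟩ := hz1
  rw [Set.mem_neg] at hs'
  exact hy ⟨y + s', hzX, -s', hs', add_neg_cancel_right y s'⟩

lemma subset_coimg_coimg (S X : Set G) : X ⊆ coimg (-S) (coimg S X) := by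
  intro x hx
  rw [coimg, Set.mem_compl_iff]
  rintro ⟨y, hy, s', hs', rfl⟩
  rw [Set.mem_neg] at hs'
  exact hy ⟨y + s', hx, -s', hs', add_neg_cancel_right y s'⟩

lemma neg_zero_mem {S : Set G} (h0 : (0:G) ∈ S) : (0:G) ∈ -S := by
  rw [Set.mem_neg, neg_zero]; exact h0

lemma neg_ne_univ {S : Set G} (hne : S ≠ Set.univ) : -S ≠ Set.univ := by
  intro h
  apply hne
  rw [← neg_neg S, h, Set.neg_univ]

lemma cand_coimg (hfin : (Set.univ : Set G).Finite) {S F : Set G}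
    (hF : IsFragment S F 1) : Cand (-S) (coimg S F) := by
  refine ⟨hfin.subset (Set.subset_univ _), by simpa using coimg_nonempty hF, ?_⟩
  simp only [Set.one_le_encard_iff_nonempty]
  exact (frag_nonempty hF).mono (subset_coimg_coimg S F)

lemma kappa_neg_le (hfin : (Set.univ : Set G).Finite) {S : Set G}
    (h0 : (0:G) ∈ S) (hne : S ≠ Set.univ) : kappa (-S) 1 ≤ kappa S 1 := by
  obtain ⟨F, hF⟩ := exists_fragment h0 hne
  calc kappa (-S) 1 ≤ (bdry (-S) (coimg S F)).encard := kappa_le (cand_coimg hfin hF)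
    _ ≤ (bdry S F).encard := Set.encard_mono (bdry_coimg_subset S F)
    _ = kappa S 1 := hF.2.2.2

lemma kappa_neg_eq (hfin : (Set.univ : Set G).Finite) {S : Set G}
    (h0 : (0:G) ∈ S) (hne : S ≠ Set.univ) : kappa (-S) 1 = kappa S 1 := by
  refine le_antisymm (kappa_neg_le hfin h0 hne) ?_
  have := kappa_neg_le hfin (neg_zero_mem h0) (neg_ne_univ hne)
  rwa [neg_neg] at this

lemma coimg_frag (hfin : (Set.univ : Set G).Finite) {S F : Set G}
    (h0 : (0:G) ∈ S) (hne : S ≠ Set.univ)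
    (hF : IsFragment S F 1) : IsFragment (-S) (coimg S F) 1 := by
  refine frag_iff.2 ⟨cand_coimg hfin hF, ?_⟩
  rw [kappa_neg_eq hfin h0 hne]
  exact (Set.encard_mono (bdry_coimg_subset S F)).trans_eq hF.2.2.2

/-! ### The bad case -/

lemma enat_cancel {a b c : ℕ∞} (ha : a ≠ ⊤) (h : a + b ≤ a + c) : b ≤ c :=
  WithTop.le_of_add_le_add_left ha h

lemma bad {S A F : Set G} (h0 : (0:G) ∈ S) (hne : S ≠ Set.univ) (hk : kappa S 1 ≠ ⊤)
    (hA : IsAtomK S A 1) (hF : IsFragment S F 1) (hi : (A ∩ F).Nonempty)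
    (hu : coimg S (A ∪ F) = ∅) :
    (Set.univ : Set G).Finite ∧ ∃ C, IsFragment (-S) C 1 ∧ C.encard < A.encard := by
  have hAf := hA.1
  have huniv : (A ∪ F) + S = Set.univ := by
    rw [coimg, Set.compl_empty_iff] at hu
    exact hu
  have hbdA : (bdry S A).Finite := by
    rw [← Set.encard_ne_top_iff, hAf.2.2.2]; exact hk
  have hbdF : (bdry S F).Finite := by
    rw [← Set.encard_ne_top_iff, hF.2.2.2]; exact hk
  have hfin : (Set.univ : Set G).Finite := by
    rw [← huniv, Set.union_add, add_eq_union h0 A, add_eq_union h0 F]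
    exact ((hAf.1.union hbdA).union (hF.1.union hbdF))
  -- candidate A ∩ F
  have hcap : Cand S (A ∩ F) := by
    refine ⟨hAf.1.subset Set.inter_subset_left, by simpa using hi, ?_⟩
    simp only [Set.one_le_encard_iff_nonempty]
    exact (coimg_nonempty hAf).mono (coimg_mono Set.inter_subset_left)
  -- boundary of the union is small
  have hbu : (bdry S (A ∪ F)).encard ≤ kappa S 1 := by
    have h3 := submod S A F
    rw [hAf.2.2.2, hF.2.2.2] at h3
    have h4 : (bdry S (A ∪ F)).encard + kappa S 1 ≤ kappa S 1 + kappa S 1 :=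
      le_trans (add_le_add_right (kappa_le hcap) _) h3
    rw [add_comm ((bdry S (A ∪ F)).encard) (kappa S 1)] at h4
    exact enat_cancel hk h4
  -- the dual fragment
  set C := coimg S F with hC
  have hCfrag : IsFragment (-S) C 1 := coimg_frag hfin h0 hne hF
  -- counting
  have e2 : kappa S 1 + F.encard = (F + S).encard := by
    rw [← hF.2.2.2]
    exact Set.encard_diff_add_encard_of_subset (subset_add h0 F)
  have e3 : (Set.univ : Set G).encard
      = (bdry S (A ∪ F)).encard + (A ∪ F).encard := by
    rw [← huniv, bdry]
    exact (Set.encard_diff_add_encard_of_subset (subset_add h0 (A ∪ F))).symm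
  have h5 : kappa S 1 + (F.encard + C.encard) ≤ kappa S 1 + (A ∪ F).encard := by
    calc kappa S 1 + (F.encard + C.encard)
        = (kappa S 1 + F.encard) + C.encard := (add_assoc _ _ _).symm
      _ = (F + S).encard + (F + S)ᶜ.encard := by rw [e2]; rfl
      _ = (Set.univ : Set G).encard := Set.encard_add_encard_compl _
      _ = (bdry S (A ∪ F)).encard + (A ∪ F).encard := e3
      _ ≤ kappa S 1 + (A ∪ F).encard := add_le_add_left hbu _
  have h6 : F.encard + C.encard ≤ (A ∪ F).encard := enat_cancel hk h5
  have hFtop : F.encard ≠ ⊤ := Set.encard_ne_top_iff.2 hF.1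
  have h7 : F.encard + (C.encard + (A ∩ F).encard) ≤ F.encard + A.encard := by
    calc F.encard + (C.encard + (A ∩ F).encard)
        = (F.encard + C.encard) + (A ∩ F).encard := (add_assoc _ _ _).symm
      _ ≤ (A ∪ F).encard + (A ∩ F).encard := add_le_add_left h6 _
      _ = A.encard + F.encard := Set.encard_union_add_encard_inter A F
      _ = F.encard + A.encard := add_comm _ _
  have h8 : C.encard + (A ∩ F).encard ≤ A.encard := enat_cancel hFtop h7
  have h9 : C.encard + 1 ≤ A.encard :=
    le_trans (add_le_add_right (by simpa using hi) _) h8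
  have hCtop : C.encard ≠ ⊤ := Set.encard_ne_top_iff.2 (hfin.subset (Set.subset_univ _))
  exact ⟨hfin, C, hCfrag, (ENat.add_one_le_iff hCtop).1 h9⟩


/-! ### Negation lemmas -/

lemma neg_diff' (A B : Set G) : -(A \ B) = (-A) \ (-B) := by
  rw [← Set.image_neg_eq_neg, ← Set.image_neg_eq_neg, ← Set.image_neg_eq_neg]
  exact Set.image_diff neg_injective _ _

lemma neg_compl' (A : Set G) : -(Aᶜ) = (-A)ᶜ := by
  rw [← Set.image_neg_eq_neg, ← Set.image_neg_eq_neg]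
  exact Set.image_compl_eq (Equiv.neg G).bijective

lemma encard_neg (A : Set G) : (-A).encard = A.encard := by
  rw [← Set.image_neg_eq_neg]
  exact neg_injective.encard_image _

lemma frag_neg_symm {S K : Set G} (hsym : -K = K) (hkk : kappa (-S) 1 = kappa S 1)
    (hfr : IsFragment (-S) K 1) : IsFragment S K 1 := by
  have hKS : -(K + -S) = K + S := by
    rw [neg_add_rev, neg_neg, hsym, add_comm]
  have hbd : bdry S K = -(bdry (-S) K) := by
    rw [bdry, bdry, neg_diff', hKS, hsym]
  have hco : coimg S K = -(coimg (-S) K) := by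
    rw [coimg, coimg, neg_compl', hKS]
  refine ⟨hfr.1, hfr.2.1, ?_, ?_⟩
  · rw [hco, encard_neg]
    exact hfr.2.2.1
  · rw [hbd, encard_neg, hfr.2.2.2, hkk]

/-! ### The good case globally: atoms are translation invariant -/

def NoBad (S : Set G) : Prop :=
  ∀ A F : Set G, IsAtomK S A 1 → IsFragment S F 1 → (A ∩ F).Nonempty →
    (coimg S (A ∪ F)).Nonempty

lemma sub_mem_of_noBad {S A : Set G} (hk : kappa S 1 ≠ ⊤) (hnb : NoBad S)
    (hA : IsAtomK S A 1) (h0A : (0:G) ∈ A) :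
    ∀ g ∈ A, ∀ h ∈ A, h - g ∈ A := by
  intro g hg h hh
  set B := {-g} + A with hBdef
  have hB : IsAtomK S B 1 := atom_sadd (-g) hA
  have h0B : (0:G) ∈ B := by
    have := Set.add_mem_add (Set.mem_singleton (-g)) hg
    rwa [neg_add_cancel] at this
  have hi : (A ∩ B).Nonempty := ⟨0, h0A, h0B⟩
  have hi' : (B ∩ A).Nonempty := ⟨0, h0B, h0A⟩
  have h1 : A ⊆ B := atom_subset hk hA hB.1 hi (hnb A B hA hB.1 hi)
  have h2 : B ⊆ A := atom_subset hk hB hA.1 hi' (hnb B A hB hA.1 hi')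
  have hBA : B = A := Set.Subset.antisymm h2 h1
  have hmem : -g + h ∈ B := Set.add_mem_add (Set.mem_singleton (-g)) hh
  rw [hBA, neg_add_eq_sub] at hmem
  exact hmem

end Stmt5


/-- A `1`-atom containing `0` is a subgroup, and `κ₁(S) ≥ |S|/2`. -/
theorem stmt_5 (S : Set G) (hgen : AddSubgroup.closure S = ⊤) (h0 : (0 : G) ∈ S)
    (hne : S ≠ Set.univ) (H : Set G) (hH : IsAtomK S H 1) (h0H : (0 : G) ∈ H) :
    (∃ K : AddSubgroup G, H = (K : Set G)) ∧ S.encard ≤ 2 * kappa S 1 := by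
  classical
  open Stmt5 in
  by_cases hk : kappa S 1 = ⊤
  · -- degenerate case: every candidate is a fragment, so the atom is `{0}`
    have hfrag0 : IsFragment S ({0} : Set G) 1 :=
      frag_iff.2 ⟨cand_singleton h0 hne 0, by rw [hk]; exact le_top⟩
    have h1 : H.encard ≤ 1 := by
      have := hH.2 _ hfrag0
      simpa using this
    have hH0 : H = {0} := by
      have h01 : ({0} : Set G) ⊆ H := Set.singleton_subset_iff.2 h0H
      have := hH.1.1.eq_of_subset_of_encard_le' h01 (by simpa using h1)
      exact this.symm
    refine ⟨⟨⊥, by rw [hH0]; rfl⟩, ?_⟩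
    rw [hk]
    rw [ENat.mul_top (by norm_num : (2:ℕ∞) ≠ 0)]
    exact le_top
  · -- main case: `κ` is finite
    have hsub : ∀ g ∈ H, ∀ h ∈ H, h - g ∈ H := by
      intro g hg h hh
      by_cases hnb : NoBad S
      · exact sub_mem_of_noBad hk hnb hH h0H g hg h hh
      · exfalso
        unfold NoBad at hnb
        push_neg at hnb
        obtain ⟨A, F, hA, hF, hi, hu⟩ := hnb
        obtain ⟨hfin, C, hCfrag, hClt⟩ := bad h0 hne hk hA hF hi hu
        have hCH : C.encard < H.encard := lt_of_lt_of_le hClt (hA.2 _ hH.1)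
        have hkneg : kappa (-S) 1 = kappa S 1 := kappa_neg_eq hfin h0 hne
        have hk' : kappa (-S) 1 ≠ ⊤ := by rw [hkneg]; exact hk
        by_cases hnb2 : NoBad (-S)
        · -- the `-S`-atom through `0` is symmetric, giving a small `S`-fragment
          obtain ⟨C0', hC0'⟩ := exists_atom (neg_zero_mem h0) (neg_ne_univ hne)
          obtain ⟨c, hc⟩ := frag_nonempty hC0'.1
          set C0 := {-c} + C0' with hC0def
          have hC0 : IsAtomK (-S) C0 1 := atom_sadd _ hC0'
          have h0C0 : (0:G) ∈ C0 := by
            have := Set.add_mem_add (Set.mem_singleton (-c)) hc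
            rwa [neg_add_cancel] at this
          have hclosed := sub_mem_of_noBad hk' hnb2 hC0 h0C0
          have hsym : -C0 = C0 := by
            apply Set.Subset.antisymm
            · intro x hx
              rw [Set.mem_neg] at hx
              have := hclosed (-x) hx 0 h0C0
              simpa using this
            · intro x hx
              rw [Set.mem_neg]
              have := hclosed x hx 0 h0C0
              simpa using this
          have hfragS : IsFragment S C0 1 := frag_neg_symm hsym hkneg hC0.1
          have l1 : H.encard ≤ C0.encard := hH.2 _ hfragS
          have l2 : C0.encard ≤ C.encard := by
            rw [hC0def, encard_sadd]
            exact hC0'.2 _ hCfrag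
          exact absurd ((l1.trans l2).trans_lt hCH) (lt_irrefl _)
        · -- a bad pair for `-S` as well: contradiction
          unfold NoBad at hnb2
          push_neg at hnb2
          obtain ⟨A', F', hA', hF', hi', hu'⟩ := hnb2
          obtain ⟨-, D, hDfrag, hDlt⟩ :=
            bad (neg_zero_mem h0) (neg_ne_univ hne) hk' hA' hF' hi' hu'
          rw [neg_neg] at hDfrag
          have l1 : H.encard ≤ D.encard := hH.2 _ hDfrag
          have l2 : A'.encard ≤ C.encard := hA'.2 _ hCfrag
          exact absurd (((l1.trans_lt hDlt).trans_le l2).trans hCH) (lt_irrefl _)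
    -- `H` is a subgroup
    have hneg : ∀ h ∈ H, -h ∈ H := fun h hh => by
      have := hsub h hh 0 h0H
      simpa using this
    have hadd : ∀ a ∈ H, ∀ b ∈ H, a + b ∈ H := fun a ha b hb => by
      have := hsub (-b) (hneg b hb) a ha
      simpa [sub_neg_eq_add] using this
    refine ⟨⟨{ carrier := H,
               add_mem' := fun {a b} ha hb => hadd a ha b hb,
               zero_mem' := h0H,
               neg_mem' := fun {a} ha => hneg a ha }, rfl⟩, ?_⟩
    -- the isoperimetric bound
    obtain ⟨s, hsS, hsH⟩ : ∃ s ∈ S, s ∉ H := by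
      by_contra hc
      push_neg at hc
      have hKtop : ∀ x : G, x ∈ H := by
        intro x
        have hle : AddSubgroup.closure S ≤
            { carrier := H,
              add_mem' := fun {a b} ha hb => hadd a ha b hb,
              zero_mem' := h0H,
              neg_mem' := fun {a} ha => hneg a ha } :=
          (AddSubgroup.closure_le _).2 hc
        rw [hgen] at hle
        exact hle (AddSubgroup.mem_top x)
      have h1 := coimg_nonempty hH.1
      obtain ⟨x, hx⟩ := h1
      exact hx (subset_add h0 H (hKtop x))
    have hd1 : S \ H ⊆ bdry S H := by
      rintro x ⟨hx1, hx2⟩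
      exact ⟨⟨0, h0H, x, hx1, zero_add x⟩, hx2⟩
    have hd2 : ({s} : Set G) + H ⊆ bdry S H := by
      rintro x hx
      obtain ⟨s', hs', h, hh, rfl⟩ := hx
      rw [Set.mem_singleton_iff] at hs'
      refine ⟨⟨h, hh, s', hs' ▸ hsS, add_comm h s'⟩, fun hmem => ?_⟩
      have h2 := hsub h hh (s' + h) hmem
      rw [add_sub_cancel_right] at h2
      exact hsH (hs' ▸ h2)
    have hb1 : H.encard ≤ (bdry S H).encard := by
      rw [← encard_sadd s H]
      exact Set.encard_mono hd2
    have hb2 : (S \ H).encard ≤ (bdry S H).encard := Set.encard_mono hd1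
    have hbd : (bdry S H).encard = kappa S 1 := hH.1.2.2.2
    calc S.encard = ((S ∩ H) ∪ (S \ H)).encard := by rw [Set.inter_union_diff]
      _ ≤ (S ∩ H).encard + (S \ H).encard := Set.encard_union_le _ _
      _ ≤ H.encard + (S \ H).encard :=
          add_le_add_left (Set.encard_mono Set.inter_subset_right) _
      _ ≤ kappa S 1 + kappa S 1 :=
          add_le_add (hb1.trans_eq hbd) (hb2.trans_eq hbd)
      _ = 2 * kappa S 1 := (two_mul _).symm
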